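/- Let p ≥ 2 be an integer, A₁ ∈ GL_{n₁}(ℂ) and B₁ ∈ GL_{n₂}(ℂ). Let S be an n₂×n₁ matrix of functions, each entry meromorphic at 0 (i.e. meromorphic on a punctured neighborhood of 0 in ℂ with at worst a pole at 0), such that S(p·z)·A₁ = B₁·S(z) for all z in a punctured neighborhood of 0 at which both sides are defined. Then each entry of S agrees, on a punctured neighborhood of 0, with a Laurent polynomial (an element of ℂ[z, z⁻¹]). -/

import Mathlib

open Filter Topology

attribute [local instance] Matrix.linftyOpNormedAddCommGroup Matrix.linftyOpNormedSpace

private lemma ofScalars_coeff' (c : ℕ → ℂ) (n : ℕ) :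
    (FormalMultilinearSeries.ofScalars ℂ c).coeff n = c n := by
  show (FormalMultilinearSeries.ofScalars ℂ c) n 1 = c n
  rw [FormalMultilinearSeries.ofScalars]
  simp [ContinuousMultilinearMap.mkPiAlgebraFin_apply, List.ofFn_const, Pi.one_def]

private lemma ev_ext' {f h : ℂ → ℂ} (hf : ContinuousAt f 0) (hh : ContinuousAt h 0)
    (he : ∀ᶠ z in 𝓝[≠] (0:ℂ), f z = h z) : ∀ᶠ z in 𝓝 (0:ℂ), f z = h z := by
  have h0 : f 0 = h 0 := by
    have t1 : Filter.Tendsto f (𝓝[≠] (0:ℂ)) (𝓝 (f 0)) := hf.continuousWithinAt.tendsto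
    have t2 : Filter.Tendsto h (𝓝[≠] (0:ℂ)) (𝓝 (f 0)) := t1.congr' he
    exact tendsto_nhds_unique t2 hh.continuousWithinAt.tendsto
  rw [← nhdsNE_sup_pure, Filter.eventually_sup]
  exact ⟨he, by simpa using h0⟩

private lemma analytic_shift' (n m : ℕ) (h : n ≤ m) (f : ℂ → ℂ)
    (ha : AnalyticAt ℂ (fun z => (z - 0)^n • f z) 0) :
    AnalyticAt ℂ (fun z => z^m * f z) 0 := by
  have h2 := ((analyticAt_id (𝕜 := ℂ) (E := ℂ)).pow (m - n)).mul ha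
  apply h2.congr
  apply Filter.Eventually.of_forall
  intro z
  simp only [id, sub_zero, smul_eq_mul, Pi.pow_apply, Pi.mul_apply]
  rw [← mul_assoc, ← pow_add, Nat.sub_add_cancel h]

theorem morphism_between_constant_systems_at_one_is_laurent_polynomial
    (p : ℕ) (hp : 2 ≤ p) (n₁ n₂ : ℕ)
    (A₁ : Matrix (Fin n₁) (Fin n₁) ℂ) (hA₁ : IsUnit A₁.det)
    (B₁ : Matrix (Fin n₂) (Fin n₂) ℂ) (hB₁ : IsUnit B₁.det)
    (S : Matrix (Fin n₂) (Fin n₁) (ℂ → ℂ))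
    (hS : ∀ i j, MeromorphicAt (S i j) 0)
    (heq : ∀ᶠ z in 𝓝[≠] (0 : ℂ),
      (Matrix.of fun i j => S i j ((p : ℂ) * z)) * A₁
        = B₁ * (Matrix.of fun i j => S i j z)) :
    ∀ i j, ∃ c : ℤ →₀ ℂ,
      ∀ᶠ z in 𝓝[≠] (0 : ℂ), S i j z = c.sum fun k a => a * z ^ k := by
  classical
  -- pole orders and a common multiplier exponent `m`
  have hmero : ∀ i j, ∃ n : ℕ, AnalyticAt ℂ (fun z => (z - 0)^n • S i j z) 0 := hS
  choose nn hnn using hmero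
  set m : ℕ := Finset.univ.sup (fun ij : Fin n₂ × Fin n₁ => nn ij.1 ij.2) with hm
  have hg : ∀ i j, AnalyticAt ℂ (fun z => z ^ m * S i j z) 0 := by
    intro i j
    exact analytic_shift' _ _ (Finset.le_sup (f := fun ij : Fin n₂ × Fin n₁ => nn ij.1 ij.2)
      (Finset.mem_univ (i, j))) _ (hnn i j)
  have hex : ∀ i j, ∃ P : FormalMultilinearSeries ℂ ℂ ℂ,
      HasFPowerSeriesAt (fun z => z ^ m * S i j z) P 0 := fun i j => hg i j
  choose P hP using hex
  -- eventual `HasSum` description of the entries near `0`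
  have hsum : ∀ i j, ∀ᶠ z in 𝓝 (0:ℂ),
      HasSum (fun n => z ^ n • (P i j).coeff n) (z ^ m * S i j z) := by
    intro i j
    have := hasFPowerSeriesAt_iff.mp (hP i j)
    simpa using this
  have hp1 : (1:ℝ) < (p:ℝ) := by
    have : (2:ℝ) ≤ (p:ℝ) := by exact_mod_cast hp
    linarith
  have hps : Filter.Tendsto (fun z : ℂ => (p:ℂ) * z) (𝓝 0) (𝓝 0) := by
    have := (continuous_const.mul continuous_id (f := fun _ : ℂ => (p:ℂ))).tendsto (0:ℂ)
    simpa [Pi.mul_def] using this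
  have hsum' : ∀ i j, ∀ᶠ z in 𝓝 (0:ℂ),
      HasSum (fun n => z ^ n • ((p:ℂ) ^ n * (P i j).coeff n))
        (((p:ℂ)*z) ^ m * S i j ((p:ℂ)*z)) := by
    intro i j
    filter_upwards [hps.eventually (hsum i j)] with z hz
    have hfe : (fun n => z ^ n • ((p:ℂ) ^ n * (P i j).coeff n))
        = fun n => ((p:ℂ)*z) ^ n • (P i j).coeff n := by
      funext n
      simp only [smul_eq_mul, mul_pow]
      ring
    rw [hfe]
    exact hz
  -- coefficient matrices
  set c : ℕ → Matrix (Fin n₂) (Fin n₁) ℂ :=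
    fun k => Matrix.of fun i j => (P i j).coeff k with hcdef
  -- the functional equation for the coefficients
  have hc : ∀ k, (p:ℂ)^k • (c k * A₁) = (p:ℂ)^m • (B₁ * c k) := by
    have key : ∀ (i : Fin n₂) (l : Fin n₁) (k : ℕ),
        (∑ j, (p:ℂ)^k * ((P i j).coeff k * A₁ j l))
          = ∑ j, (p:ℂ)^m * (B₁ i j * (P j l).coeff k) := by
      intro i l
      set f₁ : ℂ → ℂ := fun z => ∑ j, ((p:ℂ)*z) ^ m * S i j ((p:ℂ)*z) * A₁ j l with hf₁
      set f₂ : ℂ → ℂ := fun z => ∑ j, (p:ℂ)^m * (B₁ i j * (z ^ m * S j l z)) with hf₂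
      set aL : ℕ → ℂ := fun k => ∑ j, (p:ℂ)^k * ((P i j).coeff k * A₁ j l) with haL
      set aR : ℕ → ℂ := fun k => ∑ j, (p:ℂ)^m * (B₁ i j * (P j l).coeff k) with haR
      have hfL : HasFPowerSeriesAt f₁ (FormalMultilinearSeries.ofScalars ℂ aL) 0 := by
        rw [hasFPowerSeriesAt_iff]
        filter_upwards [eventually_all.2 (fun j => hsum' i j)] with z hz
        simp only [zero_add, ofScalars_coeff']
        have hterm : (fun n => z ^ n • aL n)
            = fun n => ∑ j, (z ^ n • ((p:ℂ) ^ n * (P i j).coeff n)) * A₁ j l := by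
          funext n
          simp only [haL, smul_eq_mul, Finset.mul_sum]
          exact Finset.sum_congr rfl fun j _ => by ring
        rw [hterm]
        exact hasSum_sum (fun j _ => (hz j).mul_right _)
      have hfR : HasFPowerSeriesAt f₂ (FormalMultilinearSeries.ofScalars ℂ aR) 0 := by
        rw [hasFPowerSeriesAt_iff]
        filter_upwards [eventually_all.2 (fun j => hsum j l)] with z hz
        simp only [zero_add, ofScalars_coeff']
        have hterm : (fun n => z ^ n • aR n)
            = fun n => ∑ j, ((p:ℂ)^m * B₁ i j) * (z ^ n • (P j l).coeff n) := by
          funext n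
          simp only [haR, smul_eq_mul, Finset.mul_sum]
          exact Finset.sum_congr rfl fun j _ => by ring
        have hval : f₂ z = ∑ j, ((p:ℂ)^m * B₁ i j) * (z ^ m * S j l z) := by
          simp only [hf₂]
          exact Finset.sum_congr rfl fun j _ => by ring
        rw [hterm, hval]
        exact hasSum_sum (fun j _ => (hz j).mul_left _)
      have hev : ∀ᶠ z in 𝓝[≠] (0:ℂ), f₁ z = f₂ z := by
        filter_upwards [heq] with z hz
        have h1 : (∑ j, S i j ((p:ℂ)*z) * A₁ j l) = ∑ j, B₁ i j * S j l z := by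
          have := congrFun (congrFun hz i) l
          simpa [Matrix.mul_apply] using this
        calc f₁ z = ((p:ℂ)*z) ^ m * ∑ j, S i j ((p:ℂ)*z) * A₁ j l := by
              rw [Finset.mul_sum]
              exact Finset.sum_congr rfl fun j _ => by ring
          _ = ((p:ℂ)*z) ^ m * ∑ j, B₁ i j * S j l z := by rw [h1]
          _ = f₂ z := by
              rw [Finset.mul_sum]
              exact Finset.sum_congr rfl fun j _ => by ring
      have hser : FormalMultilinearSeries.ofScalars ℂ aL
          = FormalMultilinearSeries.ofScalars ℂ aR :=
        hfL.eq_formalMultilinearSeries_of_eventually hfR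
          (ev_ext' hfL.continuousAt hfR.continuousAt hev)
      intro k
      have := congrArg (fun q : FormalMultilinearSeries ℂ ℂ ℂ => q.coeff k) hser
      simpa [ofScalars_coeff'] using this
    intro k
    ext i l
    simp only [Matrix.smul_apply, Matrix.mul_apply, smul_eq_mul, Finset.mul_sum]
    calc (∑ j, (p:ℂ)^k * (c k i j * A₁ j l))
        = ∑ j, (p:ℂ)^k * ((P i j).coeff k * A₁ j l) := rfl
      _ = ∑ j, (p:ℂ)^m * (B₁ i j * (P j l).coeff k) := key i l k
      _ = ∑ j, (p:ℂ)^m * (B₁ i j * c k j l) := rfl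
  -- eliminate `A₁`
  set A' := A₁⁻¹ with hA'
  have hinv : A₁ * A' = 1 := Matrix.mul_nonsing_inv A₁ hA₁
  have hc2 : ∀ k, (p:ℂ)^k • c k = (p:ℂ)^m • (B₁ * (c k * A')) := by
    intro k
    have := congrArg (fun M => M * A') (hc k)
    simpa only [Matrix.smul_mul, Matrix.mul_assoc, hinv, Matrix.mul_one] using this
  -- norm bound, forcing vanishing of high coefficients
  have hnorm : ∀ k, (p:ℝ)^k * ‖c k‖ ≤ ((p:ℝ)^m * (‖B₁‖ * ‖A'‖)) * ‖c k‖ := by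
    intro k
    have e1 : ‖(p:ℂ)^k • c k‖ = (p:ℝ)^k * ‖c k‖ := by
      rw [norm_smul, norm_pow, Complex.norm_natCast]
    have e2 : ‖(p:ℂ)^m • (B₁ * (c k * A'))‖ = (p:ℝ)^m * ‖B₁ * (c k * A')‖ := by
      rw [norm_smul, norm_pow, Complex.norm_natCast]
    have e3 : ‖B₁ * (c k * A')‖ ≤ ‖B₁‖ * (‖c k‖ * ‖A'‖) := by
      refine (Matrix.linfty_opNorm_mul _ _).trans ?_
      exact mul_le_mul_of_nonneg_left (Matrix.linfty_opNorm_mul _ _) (norm_nonneg _)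
    calc (p:ℝ)^k * ‖c k‖ = ‖(p:ℂ)^k • c k‖ := e1.symm
      _ = ‖(p:ℂ)^m • (B₁ * (c k * A'))‖ := by rw [hc2 k]
      _ = (p:ℝ)^m * ‖B₁ * (c k * A')‖ := e2
      _ ≤ (p:ℝ)^m * (‖B₁‖ * (‖c k‖ * ‖A'‖)) := by
          exact mul_le_mul_of_nonneg_left e3 (by positivity)
      _ = ((p:ℝ)^m * (‖B₁‖ * ‖A'‖)) * ‖c k‖ := by ring
  obtain ⟨K, hK⟩ := pow_unbounded_of_one_lt ((p:ℝ)^m * (‖B₁‖ * ‖A'‖)) hp1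
  have hzero : ∀ k, K ≤ k → ∀ i j, (P i j).coeff k = 0 := by
    intro k hk i j
    have hCk : c k = 0 := by
      by_contra h
      have hpos : (0:ℝ) < ‖c k‖ := norm_pos_iff.mpr h
      have h1 := hnorm k
      have h2 : (p:ℝ)^k ≤ (p:ℝ)^m * (‖B₁‖ * ‖A'‖) :=
        le_of_mul_le_mul_right h1 hpos
      have h3 : (p:ℝ)^K ≤ (p:ℝ)^k := pow_le_pow_right₀ (le_of_lt hp1) hk
      linarith
    simpa [hcdef] using congrFun (congrFun hCk i) j
  -- conclusion
  intro i j
  refine ⟨∑ k ∈ Finset.range K, Finsupp.single ((k:ℤ) - (m:ℤ)) ((P i j).coeff k), ?_⟩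
  have hgev : ∀ᶠ z in 𝓝 (0:ℂ),
      z ^ m * S i j z = ∑ k ∈ Finset.range K, z ^ k • (P i j).coeff k := by
    filter_upwards [hsum i j] with z hz
    refine hz.unique (hasSum_sum_of_ne_finset_zero ?_)
    intro b hb
    have hKb : K ≤ b := by simpa [Finset.mem_range, not_lt] using hb
    simp [hzero b hKb i j]
  filter_upwards [eventually_nhdsWithin_of_eventually_nhds hgev, self_mem_nhdsWithin]
    with z hz hz0
  have hz0' : z ≠ 0 := hz0
  have hfs : (∑ k ∈ Finset.range K,
        Finsupp.single ((k:ℤ) - (m:ℤ)) ((P i j).coeff k)).sum (fun k a => a * z ^ k)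
      = ∑ k ∈ Finset.range K, (P i j).coeff k * z ^ ((k:ℤ) - (m:ℤ)) := by
    rw [← Finsupp.sum_finsetSum_index (by intro w; simp) (by intro w x y; ring)]
    exact Finset.sum_congr rfl fun k _ => Finsupp.sum_single_index (by simp)
  rw [hfs]
  have hzm : z ^ m ≠ 0 := pow_ne_zero _ hz0'
  have hdiv : ∑ k ∈ Finset.range K, (P i j).coeff k * z ^ ((k:ℤ) - (m:ℤ))
      = (∑ k ∈ Finset.range K, z ^ k • (P i j).coeff k) / z ^ m := by
    rw [Finset.sum_div]
    refine Finset.sum_congr rfl fun k _ => ?_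
    rw [zpow_sub₀ hz0', zpow_natCast, zpow_natCast]
    simp only [smul_eq_mul]
    ring
  rw [hdiv, ← hz]
  exact (mul_div_cancel_left₀ _ hzm).symm
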